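/- Let σ > 0, let S ∈ ℂ^{N_t×N_t} and F ∈ ℂ^{N_sb×N_sb} be unitary matrices, let E ∈ ℂ^{N_t×N_sb}, and let W = S E Fᴴ. Let 𝒮 ⊆ {1,…,N_t} and ℱ ⊆ {1,…,N_sb} be support sets such that E(v,l) = 0 whenever exactly one of the conditions v ∈ 𝒮, l ∈ ℱ holds, and |E(v,l)| ≤ σ whenever v ∉ 𝒮 and l ∉ ℱ. Let E' be the masked coefficient matrix with E'(v,l) = E(v,l) for (v,l) ∈ 𝒮×ℱ and E'(v,l) = 0 otherwise, and let Ŵ = S E' Fᴴ. Assume every column of W has unit ℓ₂ norm and every column of Ŵ is nonzero with ℓ₂ norm at most 1. Then 1 − (1/N_sb) Σ_{l=1}^{N_sb} |W(:,l)ᴴ Ŵ(:,l)| / (‖W(:,l)‖₂ ‖Ŵ(:,l)‖₂) ≤ (1/N_sb)·(N_t − |𝒮|)·(N_sb − |ℱ|)·σ². -/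

import Mathlib

open Matrix BigOperators

noncomputable def colNorm {Nt Nsb : ℕ} (W : Matrix (Fin Nt) (Fin Nsb) ℂ) (l : Fin Nsb) : ℝ :=
  Real.sqrt (∑ v, Complex.normSq (W v l))

noncomputable def colInner {Nt Nsb : ℕ} (W W' : Matrix (Fin Nt) (Fin Nsb) ℂ) (l : Fin Nsb) : ℂ :=
  ∑ v, (starRingEnd ℂ) (W v l) * (W' v l)

noncomputable def colVec {Nt Nsb : ℕ} (A : Matrix (Fin Nt) (Fin Nsb) ℂ) (l : Fin Nsb) :
    EuclideanSpace ℂ (Fin Nt) := WithLp.toLp 2 (fun v => A v l)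

lemma colNorm_eq {Nt Nsb : ℕ} (A : Matrix (Fin Nt) (Fin Nsb) ℂ) (l : Fin Nsb) :
    colNorm A l = ‖colVec A l‖ := by
  rw [EuclideanSpace.norm_eq, colNorm]
  congr 1
  exact Finset.sum_congr rfl fun v _ => by
    rw [show (colVec A l) v = A v l from rfl, Complex.sq_norm]

lemma colInner_eq {Nt Nsb : ℕ} (A B : Matrix (Fin Nt) (Fin Nsb) ℂ) (l : Fin Nsb) :
    colInner A B l = inner ℂ (colVec A l) (colVec B l) := by
  rw [colInner, PiLp.inner_apply]
  exact Finset.sum_congr rfl fun v _ => by rw [RCLike.inner_apply']; rfl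

lemma key_ineq (a c : ℝ) (ha : 0 < a) (ha1 : a ≤ 1) (hc0 : 0 ≤ c) (hca : c ≤ a) :
    1 - c / a ≤ 1 + a ^ 2 - 2 * c := by
  have h : a * (1 - c / a) ≤ a * (1 + a ^ 2 - 2 * c) := by
    have e : a * (1 - c / a) = a - c := by field_simp
    rw [e]
    nlinarith [mul_nonneg hc0 (sq_nonneg (1 - a)), mul_nonneg (sq_nonneg a) (sub_nonneg.2 hca)]
  exact le_of_mul_le_mul_left h ha

lemma frob_eq_trace {m n : ℕ} (A : Matrix (Fin m) (Fin n) ℂ) :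
    ((∑ l, ∑ v, Complex.normSq (A v l) : ℝ) : ℂ) = Matrix.trace (Aᴴ * A) := by
  push_cast
  simp [Matrix.trace, Matrix.diag, Matrix.mul_apply, Matrix.conjTranspose_apply,
    Complex.normSq_eq_conj_mul_self]

lemma frob_invariant {m n : ℕ} (S : Matrix (Fin m) (Fin m) ℂ) (F : Matrix (Fin n) (Fin n) ℂ)
    (hS : Sᴴ * S = 1) (hF : Fᴴ * F = 1) (D : Matrix (Fin m) (Fin n) ℂ) :
    ∑ l, ∑ v, Complex.normSq ((S * D * Fᴴ) v l) = ∑ l, ∑ v, Complex.normSq (D v l) := by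
  have h1 : (S * D * Fᴴ)ᴴ * (S * D * Fᴴ) = F * (Dᴴ * D * Fᴴ) := by
    rw [Matrix.conjTranspose_mul, Matrix.conjTranspose_mul, Matrix.conjTranspose_conjTranspose]
    simp only [Matrix.mul_assoc]
    rw [← Matrix.mul_assoc Sᴴ S (D * Fᴴ), hS, Matrix.one_mul]
  have h2 : Matrix.trace ((S * D * Fᴴ)ᴴ * (S * D * Fᴴ)) = Matrix.trace (Dᴴ * D) := by
    rw [h1, Matrix.trace_mul_comm, Matrix.mul_assoc, hF, Matrix.mul_one]
  have h3 := (frob_eq_trace (S * D * Fᴴ)).trans (h2.trans (frob_eq_trace D).symm)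
  exact_mod_cast h3

theorem dominant_approximation_step_b
    {Nt Nsb : ℕ} (hNsb : 0 < Nsb)
    (σ : ℝ) (hσ : 0 < σ)
    (S : Matrix (Fin Nt) (Fin Nt) ℂ) (F : Matrix (Fin Nsb) (Fin Nsb) ℂ)
    (hS : Sᴴ * S = 1 ∧ S * Sᴴ = 1) (hF : Fᴴ * F = 1 ∧ F * Fᴴ = 1)
    (E : Matrix (Fin Nt) (Fin Nsb) ℂ)
    (W : Matrix (Fin Nt) (Fin Nsb) ℂ) (hW : W = S * E * Fᴴ)
    (𝒮 : Finset (Fin Nt)) (ℱ : Finset (Fin Nsb))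
    (hE0 : ∀ v l, ((v ∈ 𝒮 ∧ l ∉ ℱ) ∨ (v ∉ 𝒮 ∧ l ∈ ℱ)) → E v l = 0)
    (hEσ : ∀ v l, v ∉ 𝒮 → l ∉ ℱ → ‖E v l‖ ≤ σ)
    (E' : Matrix (Fin Nt) (Fin Nsb) ℂ)
    (hE' : ∀ v l, E' v l = if v ∈ 𝒮 ∧ l ∈ ℱ then E v l else 0)
    (What : Matrix (Fin Nt) (Fin Nsb) ℂ) (hWhat : What = S * E' * Fᴴ)
    (hWcol : ∀ l, colNorm W l = 1)
    (hWhatcol : ∀ l, colNorm What l ≠ 0 ∧ colNorm What l ≤ 1) :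
    1 - (1 / (Nsb : ℝ)) *
        ∑ l, ‖colInner W What l‖ / (colNorm W l * colNorm What l) ≤
      (1 / (Nsb : ℝ)) * ((Nt : ℝ) - 𝒮.card) * ((Nsb : ℝ) - ℱ.card) * σ ^ 2 := by
  have hN : (0:ℝ) < Nsb := by exact_mod_cast hNsb
  set D := E - E' with hDdef
  have hWsub : W - What = S * D * Fᴴ := by
    rw [hW, hWhat, hDdef, Matrix.mul_sub, Matrix.sub_mul]
  have hfrob : ∑ l, ∑ v, Complex.normSq ((W - What) v l) = ∑ l, ∑ v, Complex.normSq (D v l) := by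
    rw [hWsub]; exact frob_invariant S F hS.1 hF.1 D
  -- D vanishes off 𝒮ᶜ × ℱᶜ
  have hDzero : ∀ v l, (v ∈ 𝒮 ∨ l ∈ ℱ) → D v l = 0 := by
    intro v l h
    by_cases hv : v ∈ 𝒮 <;> by_cases hl : l ∈ ℱ
    · simp [hDdef, Matrix.sub_apply, hE' v l, hv, hl]
    · simp [hDdef, Matrix.sub_apply, hE' v l, hl, hE0 v l (Or.inl ⟨hv, hl⟩)]
    · simp [hDdef, Matrix.sub_apply, hE' v l, hv, hE0 v l (Or.inr ⟨hv, hl⟩)]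
    · tauto
  -- Frobenius bound on D
  have hsumbound : ∑ l, ∑ v, Complex.normSq (D v l)
      ≤ ((Nt : ℝ) - 𝒮.card) * (((Nsb : ℝ) - ℱ.card) * σ ^ 2) := by
    have hle : ∀ l v, Complex.normSq (D v l) ≤ if v ∈ 𝒮 ∨ l ∈ ℱ then 0 else σ ^ 2 := by
      intro l v
      by_cases h : v ∈ 𝒮 ∨ l ∈ ℱ
      · simp [h, hDzero v l h]
      · push_neg at h
        rw [if_neg (by tauto)]
        have hDE : D v l = E v l := by
          simp [hDdef, Matrix.sub_apply, hE' v l, h.1]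
        rw [hDE, ← Complex.sq_norm]
        exact pow_le_pow_left₀ (norm_nonneg _) (hEσ v l h.1 h.2) 2
    have hScard : ((𝒮ᶜ.card : ℕ) : ℝ) = (Nt : ℝ) - 𝒮.card := by
      rw [Finset.card_compl, Nat.cast_sub (Finset.card_le_univ 𝒮)]
      simp
    have hFcard : ((ℱᶜ.card : ℕ) : ℝ) = (Nsb : ℝ) - ℱ.card := by
      rw [Finset.card_compl, Nat.cast_sub (Finset.card_le_univ ℱ)]
      simp
    calc ∑ l, ∑ v, Complex.normSq (D v l)
        ≤ ∑ l, ∑ v, (if v ∈ 𝒮 ∨ l ∈ ℱ then (0:ℝ) else σ ^ 2) :=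
          Finset.sum_le_sum fun l _ => Finset.sum_le_sum fun v _ => hle l v
      _ = ∑ l : Fin Nsb, (if l ∈ ℱ then (0:ℝ) else (𝒮ᶜ.card : ℝ) * σ ^ 2) := by
          refine Finset.sum_congr rfl fun l _ => ?_
          by_cases hl : l ∈ ℱ
          · simp [hl]
          · rw [if_neg hl]
            have hx : ∀ x : Fin Nt, (if x ∈ 𝒮 ∨ l ∈ ℱ then (0:ℝ) else σ ^ 2)
                = (if x ∈ 𝒮ᶜ then σ ^ 2 else 0) := by
              intro x; by_cases hxx : x ∈ 𝒮 <;> simp [hxx, hl]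
            rw [Finset.sum_congr rfl fun x _ => hx x, Finset.sum_ite_mem, Finset.univ_inter,
              Finset.sum_const, nsmul_eq_mul]
      _ = ((Nt : ℝ) - 𝒮.card) * (((Nsb : ℝ) - ℱ.card) * σ ^ 2) := by
          have hy : ∀ l : Fin Nsb, (if l ∈ ℱ then (0:ℝ) else (𝒮ᶜ.card : ℝ) * σ ^ 2)
              = (if l ∈ ℱᶜ then (𝒮ᶜ.card : ℝ) * σ ^ 2 else 0) := by
            intro l; by_cases hl : l ∈ ℱ <;> simp [hl]
          rw [Finset.sum_congr rfl fun l _ => hy l, Finset.sum_ite_mem, Finset.univ_inter,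
            Finset.sum_const, nsmul_eq_mul, hScard, hFcard]
          ring
  -- per-column inequality
  have percol : ∀ l, 1 - ‖colInner W What l‖ / (colNorm W l * colNorm What l)
      ≤ ∑ v, Complex.normSq ((W - What) v l) := by
    intro l
    have hu1 : ‖colVec W l‖ = 1 := by rw [← colNorm_eq]; exact hWcol l
    have ha0 : 0 < ‖colVec What l‖ := by
      rw [← colNorm_eq]
      exact lt_of_le_of_ne (Real.sqrt_nonneg _) (Ne.symm (hWhatcol l).1)
    have ha1 : ‖colVec What l‖ ≤ 1 := by rw [← colNorm_eq]; exact (hWhatcol l).2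
    have hcs : ‖(inner ℂ (colVec W l) (colVec What l) : ℂ)‖ ≤ ‖colVec What l‖ := by
      have := norm_inner_le_norm (𝕜 := ℂ) (colVec W l) (colVec What l)
      rwa [hu1, one_mul] at this
    have hre : Complex.re (inner ℂ (colVec W l) (colVec What l))
        ≤ ‖(inner ℂ (colVec W l) (colVec What l) : ℂ)‖ := Complex.re_le_norm _
    have hns : ‖colVec W l - colVec What l‖ ^ 2 = ∑ v, Complex.normSq ((W - What) v l) := by
      have hsub : colVec W l - colVec What l = colVec (W - What) l := by
        ext v; simp [colVec, Matrix.sub_apply]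
      rw [hsub, ← colNorm_eq, colNorm, Real.sq_sqrt (Finset.sum_nonneg fun v _ => Complex.normSq_nonneg _)]
    have hexp : ‖colVec W l - colVec What l‖ ^ 2
        = 1 - 2 * Complex.re (inner ℂ (colVec W l) (colVec What l)) + ‖colVec What l‖ ^ 2 := by
      rw [norm_sub_sq (𝕜 := ℂ), hu1]; norm_num
    rw [colNorm_eq, colNorm_eq, colInner_eq, hu1, one_mul, ← hns, hexp]
    calc 1 - ‖(inner ℂ (colVec W l) (colVec What l) : ℂ)‖ / ‖colVec What l‖
        ≤ 1 + ‖colVec What l‖ ^ 2 - 2 * ‖(inner ℂ (colVec W l) (colVec What l) : ℂ)‖ :=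
          key_ineq _ _ ha0 ha1 (norm_nonneg _) hcs
      _ ≤ 1 - 2 * Complex.re (inner ℂ (colVec W l) (colVec What l)) + ‖colVec What l‖ ^ 2 := by
          nlinarith [hre]
  -- assemble
  set ρ : Fin Nsb → ℝ := fun l => ‖colInner W What l‖ / (colNorm W l * colNorm What l) with hρ
  have main : (Nsb : ℝ) - ∑ l, ρ l ≤ ((Nt : ℝ) - 𝒮.card) * (((Nsb : ℝ) - ℱ.card) * σ ^ 2) := by
    calc (Nsb : ℝ) - ∑ l, ρ l = ∑ l : Fin Nsb, (1 - ρ l) := by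
          rw [Finset.sum_sub_distrib, Finset.sum_const, Finset.card_univ, Fintype.card_fin,
            nsmul_eq_mul, mul_one]
      _ ≤ ∑ l, ∑ v, Complex.normSq ((W - What) v l) := Finset.sum_le_sum fun l _ => percol l
      _ = ∑ l, ∑ v, Complex.normSq (D v l) := hfrob
      _ ≤ _ := hsumbound
  have expand : 1 - (1 / (Nsb : ℝ)) * ∑ l, ρ l = (1 / (Nsb : ℝ)) * ((Nsb : ℝ) - ∑ l, ρ l) := by
    field_simp
  have rhseq : (1 / (Nsb : ℝ)) * ((Nt : ℝ) - 𝒮.card) * ((Nsb : ℝ) - ℱ.card) * σ ^ 2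
      = (1 / (Nsb : ℝ)) * (((Nt : ℝ) - 𝒮.card) * (((Nsb : ℝ) - ℱ.card) * σ ^ 2)) := by ring
  rw [expand, rhseq]
  exact mul_le_mul_of_nonneg_left main (by positivity)
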